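/- Let F, G be density operators on ℂ^d ⊗ ℂ^d, K ≥ 2, and define the map 𝓛(τ) = F·Tr(Φ_K τ) + G·Tr((𝟙−Φ_K)τ) on operators of ℂ^K ⊗ ℂ^K. Then 𝓛(τ^Γ)^Γ ≥ 0 for all τ ≥ 0 if and only if both F^Γ/K + (1−1/K)G^Γ ≥ 0 and (1+1/K)G^Γ − F^Γ/K ≥ 0. (Uses Φ_K^Γ = (𝒮−𝒜)/K and that 𝒮, 𝒜 are orthogonal projectors summing to 𝟙.) -/

import Mathlib

open scoped ComplexOrder

/-- The basis vector `|ij⟩` of `ℂ^n ⊗ ℂ^n`. -/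
def ketC {n : ℕ} (i j : Fin n) : Fin n × Fin n → ℂ := fun p => if p = (i, j) then 1 else 0

/-- Partial transpose: `(|ij⟩⟨kl|)^Γ = |il⟩⟨kj|`. -/
def ptransC {n : ℕ} (M : Matrix (Fin n × Fin n) (Fin n × Fin n) ℂ) :
    Matrix (Fin n × Fin n) (Fin n × Fin n) ℂ :=
  fun p q => M (p.1, q.2) (q.1, p.2)

section Aux

open Matrix

lemma psd_smul' {n : Type*} [Fintype n] {M : Matrix n n ℂ} (hM : M.PosSemidef)
    {c : ℂ} (hc : 0 ≤ c) : (c • M).PosSemidef := by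
  have hcr : (starRingEnd ℂ) c = c := by
    rw [Complex.conj_eq_iff_im]; exact ((Complex.le_def).mp hc).2.symm
  rw [Matrix.posSemidef_iff_dotProduct_mulVec]
  constructor
  · unfold Matrix.IsHermitian
    rw [Matrix.conjTranspose_smul, hM.1.eq]
    simp [hcr]
  · intro x
    rw [Matrix.smul_mulVec, dotProduct_smul, smul_eq_mul]
    exact mul_nonneg hc (hM.dotProduct_mulVec_nonneg x)

lemma psd_trace_nonneg' {n : Type*} [Fintype n] [DecidableEq n] {M : Matrix n n ℂ}
    (hM : M.PosSemidef) : 0 ≤ M.trace := by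
  rw [Matrix.trace]
  refine Finset.sum_nonneg fun i _ => ?_
  simpa [dotProduct, Pi.single_apply, apply_ite] using hM.dotProduct_mulVec_nonneg (Pi.single i 1)

lemma trace_mul_nonneg' {n : Type*} [Fintype n] [DecidableEq n] {A B : Matrix n n ℂ}
    (hA : A.PosSemidef) (hB : B.PosSemidef) : 0 ≤ (A * B).trace := by
  open scoped MatrixOrder in obtain ⟨C, rfl⟩ := CStarAlgebra.nonneg_iff_eq_star_mul_self.mp hB.nonneg
  rw [← Matrix.mul_assoc, Matrix.trace_mul_cycle]
  exact psd_trace_nonneg' (hA.mul_mul_conjTranspose_same C)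

lemma psd_vmv {n : Type*} [Fintype n] (v : n → ℂ) : (Matrix.vecMulVec v (star v)).PosSemidef := by
  rw [Matrix.posSemidef_iff_dotProduct_mulVec]
  constructor
  · ext p q
    simp [Matrix.conjTranspose_apply, Matrix.vecMulVec_apply, mul_comm]
  · intro x
    set c : ℂ := ∑ q, (starRingEnd ℂ) (v q) * x q with hc
    have hmv : Matrix.vecMulVec v (star v) *ᵥ x = fun p => v p * c := by
      funext p
      simp [Matrix.mulVec, dotProduct, Matrix.vecMulVec_apply, hc, Finset.mul_sum,
        mul_assoc]
    rw [hmv]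
    have h1 : (star x ⬝ᵥ fun p => v p * c) = (∑ p, (starRingEnd ℂ) (x p) * v p) * c := by
      rw [Finset.sum_mul]
      simp [dotProduct, mul_assoc]
    have h2 : ∑ p, (starRingEnd ℂ) (x p) * v p = (starRingEnd ℂ) c := by
      rw [hc, map_sum]
      exact Finset.sum_congr rfl fun p _ => by simp [mul_comm]
    rw [h1, h2]
    exact star_mul_self_nonneg c

lemma ind_mul_ind {α : Type*} [DecidableEq α] [Fintype α] (x y : α) :
    ∑ p : α, (if p = x then (1:ℂ) else 0) * (if p = y then 1 else 0)
      = if x = y then 1 else 0 := by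
  simp [ite_mul, Finset.sum_ite_eq', eq_comm]

/-- The swap operator on `ℂ^K ⊗ ℂ^K`. -/
def swapM (K : ℕ) : Matrix (Fin K × Fin K) (Fin K × Fin K) ℂ :=
  fun p q => if q = (p.2, p.1) then 1 else 0

lemma swapM_herm (K : ℕ) : (swapM K).IsHermitian := by
  ext ⟨a,b⟩ ⟨c,d⟩
  simp only [Matrix.conjTranspose_apply, swapM, Prod.mk.injEq, apply_ite, star_one, star_zero]
  by_cases h1 : a = d <;> by_cases h2 : b = c <;> simp [h1, h2] <;> aesop

lemma swapM_mul_self (K : ℕ) : swapM K * swapM K = 1 := by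
  ext p q
  simp only [swapM, Matrix.mul_apply, ite_mul, one_mul, zero_mul, Finset.sum_ite_eq',
    Finset.mem_univ, if_true]
  simp [Matrix.one_apply, eq_comm]

lemma psd_one_add (K : ℕ) :
    ((1 : Matrix (Fin K × Fin K) (Fin K × Fin K) ℂ) + swapM K).PosSemidef := by
  have herm : (1 + swapM K)ᴴ = 1 + swapM K := by
    rw [Matrix.conjTranspose_add, (swapM_herm K).eq, Matrix.conjTranspose_one]
  have hsq : (1 + swapM K)ᴴ * (1 + swapM K) = (2:ℂ) • (1 + swapM K) := by
    rw [herm]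
    simp only [mul_add, add_mul, one_mul, mul_one, swapM_mul_self, two_smul]
    abel
  have h : (1 + swapM K) = (2⁻¹:ℂ) • ((1 + swapM K)ᴴ * (1 + swapM K)) := by
    rw [hsq, smul_smul]; norm_num
  rw [h]
  exact psd_smul' (Matrix.posSemidef_conjTranspose_mul_self _)
    (by rw [Complex.le_def]; norm_num)

lemma psd_one_sub (K : ℕ) :
    ((1 : Matrix (Fin K × Fin K) (Fin K × Fin K) ℂ) - swapM K).PosSemidef := by
  have herm : (1 - swapM K)ᴴ = 1 - swapM K := by
    rw [Matrix.conjTranspose_sub, (swapM_herm K).eq, Matrix.conjTranspose_one]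
  have hsq : (1 - swapM K)ᴴ * (1 - swapM K) = (2:ℂ) • (1 - swapM K) := by
    rw [herm]
    simp only [mul_sub, sub_mul, one_mul, mul_one, swapM_mul_self, two_smul]
    abel
  have h : (1 - swapM K) = (2⁻¹:ℂ) • ((1 - swapM K)ᴴ * (1 - swapM K)) := by
    rw [hsq, smul_smul]; norm_num
  rw [h]
  exact psd_smul' (Matrix.posSemidef_conjTranspose_mul_self _)
    (by rw [Complex.le_def]; norm_num)

/-- `Tr(W τ) = ∑ τ (j,i) (i,j)`. -/
noncomputable def sSum {n : ℕ} (τ : Matrix (Fin n × Fin n) (Fin n × Fin n) ℂ) : ℂ :=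
  ∑ i, ∑ j, τ (j, i) (i, j)

lemma trace_swap_mul {K : ℕ} (τ : Matrix (Fin K × Fin K) (Fin K × Fin K) ℂ) :
    (swapM K * τ).trace = sSum τ := by
  rw [Matrix.trace, sSum]
  rw [Fintype.sum_prod_type]
  congr 1; ext a; congr 1; ext b
  simp [Matrix.mul_apply, swapM, ite_mul, Finset.sum_ite_eq', Matrix.diag]

lemma trace_ket_vmv {n : ℕ} (i a j b : Fin n) (σ : Matrix (Fin n × Fin n) (Fin n × Fin n) ℂ) :
    (Matrix.vecMulVec (ketC i a) (ketC j b) * σ).trace = σ (j, b) (i, a) := by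
  simp [Matrix.trace, Matrix.diag, Matrix.mul_apply, Matrix.vecMulVec_apply, ketC,
    ite_mul, one_mul, zero_mul, Finset.sum_ite_eq', Finset.mul_sum]

lemma trace_ptransC {n : ℕ} (τ : Matrix (Fin n × Fin n) (Fin n × Fin n) ℂ) :
    (ptransC τ).trace = τ.trace := by
  simp [ptransC, Matrix.trace, Matrix.diag]

lemma trace_pm_nonneg {K : ℕ} {τ : Matrix (Fin K × Fin K) (Fin K × Fin K) ℂ}
    (hτ : τ.PosSemidef) : 0 ≤ τ.trace + sSum τ ∧ 0 ≤ τ.trace - sSum τ := by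
  have h1 := trace_mul_nonneg' (psd_one_add K) hτ
  have h2 := trace_mul_nonneg' (psd_one_sub K) hτ
  rw [Matrix.add_mul, Matrix.trace_add, Matrix.one_mul, trace_swap_mul] at h1
  rw [Matrix.sub_mul, Matrix.trace_sub, Matrix.one_mul, trace_swap_mul] at h2
  exact ⟨h1, h2⟩

end Aux

/-- For density operators `F, G` and the twirled map
`𝓛(τ) = F·Tr(Φ_K τ) + G·Tr((𝟙−Φ_K)τ)`, one has `𝓛(τ^Γ)^Γ ≥ 0` for all `τ ≥ 0` iff
`F^Γ/K + (1−1/K)G^Γ ≥ 0` and `(1+1/K)G^Γ − F^Γ/K ≥ 0`. -/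
theorem stmt15 (d K : ℕ) (hK : 2 ≤ K)
    (F G : Matrix (Fin d × Fin d) (Fin d × Fin d) ℂ)
    (hF : F.PosSemidef) (hFtr : F.trace = 1)
    (hG : G.PosSemidef) (hGtr : G.trace = 1)
    (Phi : Matrix (Fin K × Fin K) (Fin K × Fin K) ℂ)
    (hPhi : Phi = ((K:ℂ)⁻¹) • ∑ i, ∑ j, Matrix.vecMulVec (ketC i i) (ketC j j))
    (L : Matrix (Fin K × Fin K) (Fin K × Fin K) ℂ →
      Matrix (Fin d × Fin d) (Fin d × Fin d) ℂ)
    (hL : ∀ τ, L τ = (Phi * τ).trace • F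
      + ((((1 : Matrix (Fin K × Fin K) (Fin K × Fin K) ℂ) - Phi) * τ).trace) • G) :
    (∀ τ : Matrix (Fin K × Fin K) (Fin K × Fin K) ℂ, τ.PosSemidef →
        (ptransC (L (ptransC τ))).PosSemidef) ↔
      (((K:ℂ)⁻¹ • ptransC F + (1 - (K:ℂ)⁻¹) • ptransC G).PosSemidef ∧
       ((1 + (K:ℂ)⁻¹) • ptransC G - (K:ℂ)⁻¹ • ptransC F).PosSemidef) := by
  haveI : NeZero K := ⟨by omega⟩
  have hhalf : (0:ℂ) ≤ 2⁻¹ := by rw [Complex.le_def]; norm_num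
  have hTrPhi : ∀ σ : Matrix (Fin K × Fin K) (Fin K × Fin K) ℂ,
      (Phi * σ).trace = (K:ℂ)⁻¹ * ∑ i, ∑ j, σ (j, j) (i, i) := by
    intro σ
    rw [hPhi, Matrix.smul_mul, Matrix.trace_smul, smul_eq_mul]
    congr 1
    simp_rw [Finset.sum_mul, Matrix.trace_sum, trace_ket_vmv]
  have key : ∀ τ : Matrix (Fin K × Fin K) (Fin K × Fin K) ℂ,
      ptransC (L (ptransC τ)) =
        ((K:ℂ)⁻¹ * sSum τ) • ptransC F + (τ.trace - (K:ℂ)⁻¹ * sSum τ) • ptransC G := by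
    intro τ
    have hA : (Phi * ptransC τ).trace = (K:ℂ)⁻¹ * sSum τ := by
      rw [hTrPhi]; rfl
    have hB : (((1 : Matrix (Fin K × Fin K) (Fin K × Fin K) ℂ) - Phi) * ptransC τ).trace
        = τ.trace - (K:ℂ)⁻¹ * sSum τ := by
      rw [Matrix.sub_mul, Matrix.trace_sub, Matrix.one_mul, trace_ptransC, hA]
    rw [hL, hA, hB]
    ext p q
    simp [ptransC, Matrix.add_apply, Matrix.smul_apply]
  constructor
  · intro h
    have h01 : (0 : Fin K) ≠ 1 := by
      intro hc
      have := congrArg Fin.val hc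
      simp [Fin.val_one'] at this
      omega
    constructor
    · set τ₁ := Matrix.vecMulVec (ketC (0 : Fin K) 0) (star (ketC (0 : Fin K) 0)) with hτ₁
      have hs1 : sSum τ₁ = 1 := by
        simp [sSum, hτ₁, Matrix.vecMulVec_apply, ketC, Prod.ext_iff, apply_ite, ite_and,
          mul_ite, ite_mul, Finset.sum_ite_eq, Finset.sum_ite_eq']
      have ht1 : τ₁.trace = 1 := by
        simp [Matrix.trace, Matrix.diag, hτ₁, Matrix.vecMulVec_apply, ketC, apply_ite,
          mul_ite, ite_mul, Finset.sum_ite_eq, Finset.sum_ite_eq']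
      have h1 := h τ₁ (psd_vmv _)
      rw [key, hs1, ht1, mul_one] at h1
      exact h1
    · set v : Fin K × Fin K → ℂ := ketC (0 : Fin K) 1 - ketC (1 : Fin K) 0 with hv
      set τ₂ := Matrix.vecMulVec v (star v) with hτ₂
      have hket : ∀ (a b : Fin K) (p : Fin K × Fin K),
          ketC a b (p.2, p.1) = if p = (b, a) then (1:ℂ) else 0 := by
        intro a b p; simp [ketC, Prod.ext_iff, and_comm]
      have hket2 : ∀ (a b : Fin K) (p : Fin K × Fin K),
          ketC a b (p.1, p.2) = if p = (a, b) then (1:ℂ) else 0 := by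
        intro a b p; simp [ketC, Prod.ext_iff]
      have hket3 : ∀ (a b : Fin K) (p : Fin K × Fin K),
          ketC a b p = if p = (a, b) then (1:ℂ) else 0 := by
        intro a b p; simp [ketC]
      have hps : sSum τ₂ = ∑ p : Fin K × Fin K, v (p.2, p.1) * star (v (p.1, p.2)) := by
        rw [sSum]
        exact (Fintype.sum_prod_type (fun p : Fin K × Fin K =>
          v (p.2, p.1) * star (v (p.1, p.2)))).symm
      have hs2 : sSum τ₂ = -2 := by
        rw [hps]
        simp_rw [hv, Pi.sub_apply, star_sub, hket, hket2, apply_ite (star : ℂ → ℂ),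
          star_one, star_zero, sub_mul, mul_sub, Finset.sum_sub_distrib, ind_mul_ind]
        simp [Prod.ext_iff, h01, h01.symm]
        norm_num
      have ht2 : τ₂.trace = 2 := by
        have : τ₂.trace = ∑ p : Fin K × Fin K, v p * star (v p) := by
          simp [Matrix.trace, Matrix.diag, hτ₂, Matrix.vecMulVec_apply]
        rw [this]
        simp_rw [hv, Pi.sub_apply, star_sub, hket3, apply_ite (star : ℂ → ℂ),
          star_one, star_zero, sub_mul, mul_sub, Finset.sum_sub_distrib, ind_mul_ind]
        simp [Prod.ext_iff, h01, h01.symm]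
        norm_num
      have h2 := h τ₂ (psd_vmv _)
      rw [key, hs2, ht2] at h2
      have heq : (1 + (K:ℂ)⁻¹) • ptransC G - (K:ℂ)⁻¹ • ptransC F
          = (2⁻¹:ℂ) • (((K:ℂ)⁻¹ * (-2)) • ptransC F
            + ((2:ℂ) - (K:ℂ)⁻¹ * (-2)) • ptransC G) := by
        ext p q
        simp [Matrix.smul_apply, Matrix.add_apply, Matrix.sub_apply, smul_eq_mul]
        ring
      rw [heq]
      exact psd_smul' h2 hhalf
  · rintro ⟨hP, hQ⟩ τ hτ
    obtain ⟨h1, h2⟩ := trace_pm_nonneg hτ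
    rw [key]
    have heq : ((K:ℂ)⁻¹ * sSum τ) • ptransC F + (τ.trace - (K:ℂ)⁻¹ * sSum τ) • ptransC G
        = (2⁻¹ * (τ.trace + sSum τ)) • ((K:ℂ)⁻¹ • ptransC F + (1 - (K:ℂ)⁻¹) • ptransC G)
          + (2⁻¹ * (τ.trace - sSum τ)) •
            ((1 + (K:ℂ)⁻¹) • ptransC G - (K:ℂ)⁻¹ • ptransC F) := by
      ext p q
      simp [Matrix.add_apply, Matrix.smul_apply, Matrix.sub_apply, smul_eq_mul]
      ring
    rw [heq]
    exact (psd_smul' hP (mul_nonneg hhalf h1)).add (psd_smul' hQ (mul_nonneg hhalf h2))
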